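/- Let 1/4 < H < 1 and let ρ be a real number satisfying: ρ < 4H-3 if 1/4 < H < 1/2, and ρ < 2(H-1) if 1/2 ≤ H < 1. Then the series ∑_{j ∈ ℤ²₀} |j|^{2ρ+2} · ( ∑_{h ∈ ℤ²₀, h ≠ j} 1/(|h|^{4H} |h-j|^{4H}) )² converges (is finite). -/

import Mathlib

/-- Euclidean norm of an element of `ℤ²`. -/
noncomputable def znorm (k : ℤ × ℤ) : ℝ :=
  Real.sqrt ((k.1 : ℝ) ^ 2 + (k.2 : ℝ) ^ 2)

lemma znorm_nonneg (k : ℤ × ℤ) : 0 ≤ znorm k := Real.sqrt_nonneg _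

lemma one_le_znorm {k : ℤ × ℤ} (hk : k ≠ 0) : 1 ≤ znorm k := by
  have h : k.1 ≠ 0 ∨ k.2 ≠ 0 := by
    by_contra h
    push_neg at h
    exact hk (Prod.ext h.1 h.2)
  have h1 : (1 : ℝ) ≤ (k.1 : ℝ) ^ 2 + (k.2 : ℝ) ^ 2 := by
    rcases h with h | h
    · have : (1 : ℝ) ≤ |(k.1 : ℝ)| := by
        rw [← Int.cast_abs]; exact_mod_cast Int.one_le_abs h
      nlinarith [sq_nonneg ((k.2 : ℝ)), sq_abs ((k.1:ℝ)), sq_nonneg (|(k.1:ℝ)| - 1)]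
    · have : (1 : ℝ) ≤ |(k.2 : ℝ)| := by
        rw [← Int.cast_abs]; exact_mod_cast Int.one_le_abs h
      nlinarith [sq_nonneg ((k.1 : ℝ)), sq_abs ((k.2:ℝ)), sq_nonneg (|(k.2:ℝ)| - 1)]
  calc (1:ℝ) = Real.sqrt 1 := by simp
  _ ≤ znorm k := Real.sqrt_le_sqrt h1

lemma znorm_pos {k : ℤ × ℤ} (hk : k ≠ 0) : 0 < znorm k :=
  lt_of_lt_of_le one_pos (one_le_znorm hk)

lemma znorm_eq_abs (k : ℤ × ℤ) : znorm k = ‖(⟨(k.1 : ℝ), (k.2 : ℝ)⟩ : ℂ)‖ := by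
  rw [Complex.norm_def, Complex.normSq_mk, znorm]
  ring_nf

lemma znorm_triangle (h j : ℤ × ℤ) : znorm j ≤ znorm h + znorm (h - j) := by
  rw [znorm_eq_abs, znorm_eq_abs, znorm_eq_abs]
  have e : (⟨((j.1 : ℝ)), (j.2 : ℝ)⟩ : ℂ)
      = ⟨(h.1 : ℝ), (h.2 : ℝ)⟩ - ⟨(((h - j).1 : ℤ) : ℝ), (((h - j).2 : ℤ) : ℝ)⟩ := by
    simp [Complex.ext_iff, Prod.fst_sub, Prod.snd_sub]
  rw [e]
  exact norm_sub_le _ _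

open EisensteinSeries in
lemma summable_znorm_rpow {p : ℝ} (hp : 2 < p) :
    Summable (fun k : {k : ℤ × ℤ // k ≠ 0} => znorm k.1 ^ (-p)) := by
  have hs := summable_one_div_norm_rpow hp
  have hs2 : Summable (fun x : Fin 2 → ℤ => znorm (x 0, x 1) ^ (-p)) := by
    refine hs.of_nonneg_of_le (fun x => Real.rpow_nonneg (znorm_nonneg _) _) (fun x => ?_)
    by_cases hx : x = 0
    · subst hx
      simp only [Pi.zero_apply]
      rw [show ((0 : ℤ), (0 : ℤ)) = (0 : ℤ × ℤ) from rfl]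
      have : znorm (0 : ℤ × ℤ) = 0 := by simp [znorm]
      rw [this, Real.zero_rpow (by intro hc; rw [neg_eq_zero] at hc; linarith : -p ≠ 0)]
      positivity
    · have hx' : ((x 0, x 1) : ℤ × ℤ) ≠ 0 := by
        simp only [ne_eq, Prod.mk_eq_zero, not_and_or]
        by_contra hc
        push_neg at hc
        apply hx
        funext i
        fin_cases i <;> simp [hc.1, hc.2]
      have h1 : ‖x‖ ≤ znorm (x 0, x 1) := by
        rw [norm_eq_max_natAbs]
        rw [znorm]
        rcases max_cases (x 0).natAbs (x 1).natAbs with ⟨he, _⟩ | ⟨he, _⟩ <;> rw [he]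
        · rw [Nat.cast_natAbs, Int.cast_abs]
          rw [← Real.sqrt_sq_eq_abs]
          exact Real.sqrt_le_sqrt (by nlinarith [sq_nonneg ((x 1 : ℤ) : ℝ)])
        · rw [Nat.cast_natAbs, Int.cast_abs]
          rw [← Real.sqrt_sq_eq_abs]
          exact Real.sqrt_le_sqrt (by nlinarith [sq_nonneg ((x 0 : ℤ) : ℝ)])
      exact Real.rpow_le_rpow_of_nonpos (norm_pos_iff.mpr hx) h1 (by linarith)
  have he : Summable (fun k : ℤ × ℤ => znorm k ^ (-p)) := by
    have := (finTwoArrowEquiv ℤ).summable_iff (f := fun k : ℤ × ℤ => znorm k ^ (-p))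
    rw [← this]
    refine hs2.congr (fun x => ?_)
    simp [finTwoArrowEquiv]
  exact he.subtype _


lemma rpow_sq {z a : ℝ} (hz : 0 < z) : (z ^ a) ^ 2 = z ^ (2 * a) := by
  rw [← Real.rpow_natCast (z ^ a) 2, ← Real.rpow_mul hz.le]
  norm_num
  ring_nf

lemma pointwise_aux {x y z s H : ℝ} (hx : 0 < x) (hy : 0 < y) (hz : 0 < z)
    (hzx : z / 2 ≤ x) (hs0 : 0 ≤ s) :
    1 / (x ^ (4 * H) * y ^ (4 * H)) ≤
      2 ^ s * z ^ (-s) * (x ^ (-(8 * H - 2 * s)) + y ^ (-(8 * H))) := by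
  have h2 : (0:ℝ) < z / 2 := by linarith
  calc 1 / (x ^ (4 * H) * y ^ (4 * H)) = x ^ (-(4 * H)) * y ^ (-(4 * H)) := by
        rw [Real.rpow_neg hx.le, Real.rpow_neg hy.le, one_div, mul_inv]
    _ = x ^ (-s) * (x ^ (-(4 * H - s)) * y ^ (-(4 * H))) := by
        rw [← mul_assoc, ← Real.rpow_add hx]; ring_nf
    _ ≤ (z / 2) ^ (-s) * (x ^ (-(4 * H - s)) * y ^ (-(4 * H))) := by
        apply mul_le_mul_of_nonneg_right
        · exact Real.rpow_le_rpow_of_nonpos h2 hzx (neg_nonpos.mpr hs0)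
        · positivity
    _ ≤ (z / 2) ^ (-s) * (x ^ (-(8 * H - 2 * s)) + y ^ (-(8 * H))) := by
        apply mul_le_mul_of_nonneg_left _ (Real.rpow_nonneg h2.le _)
        have ha : (0:ℝ) ≤ x ^ (-(4 * H - s)) := Real.rpow_nonneg hx.le _
        have hb : (0:ℝ) ≤ y ^ (-(4 * H)) := Real.rpow_nonneg hy.le _
        have hab : x ^ (-(4 * H - s)) * y ^ (-(4 * H)) ≤
            (x ^ (-(4 * H - s))) ^ 2 + (y ^ (-(4 * H))) ^ 2 := by
          nlinarith [sq_nonneg (x ^ (-(4 * H - s)) - y ^ (-(4 * H))), mul_nonneg ha hb]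
        calc x ^ (-(4 * H - s)) * y ^ (-(4 * H))
            ≤ (x ^ (-(4 * H - s))) ^ 2 + (y ^ (-(4 * H))) ^ 2 := hab
          _ = x ^ (-(8 * H - 2 * s)) + y ^ (-(8 * H)) := by
              rw [rpow_sq hx, rpow_sq hy]; ring_nf
    _ = 2 ^ s * z ^ (-s) * (x ^ (-(8 * H - 2 * s)) + y ^ (-(8 * H))) := by
        rw [Real.div_rpow hz.le (by norm_num), Real.rpow_neg (by norm_num : (0:ℝ) ≤ 2),
          div_inv_eq_mul]
        ring


theorem statement_12 (H ρ : ℝ) (hH1 : 1 / 4 < H) (hH2 : H < 1)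
    (hρ1 : 1 / 4 < H → H < 1 / 2 → ρ < 4 * H - 3)
    (hρ2 : 1 / 2 ≤ H → H < 1 → ρ < 2 * (H - 1)) :
    Summable (fun j : {j : ℤ × ℤ // j ≠ 0} =>
      znorm j.1 ^ (2 * ρ + 2) *
        (∑' h : {h : ℤ × ℤ // h ≠ 0 ∧ h ≠ j.1},
            1 / (znorm h.1 ^ (4 * H) * znorm (h.1 - j.1) ^ (4 * H))) ^ 2) := by
  have h8H : (2:ℝ) < 8 * H := by linarith
  have hkey : ρ + 2 < 4 * H - 1 := by
    rcases lt_or_ge H (1 / 2) with h | h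
    · linarith [hρ1 hH1 h]
    · linarith [hρ2 h hH2]
  set t : ℝ := max (ρ + 2) 0 with ht
  set s : ℝ := (t + (4 * H - 1)) / 2 with hs
  have ht4 : t < 4 * H - 1 := by
    rw [ht]
    rcases max_cases (ρ + 2) 0 with ⟨he, _⟩ | ⟨he, _⟩ <;> rw [he] <;> linarith
  have hs0 : 0 ≤ s := by
    have := le_max_right (ρ + 2) (0:ℝ)
    rw [hs]; linarith
  have hsρ : ρ + 2 < s := by
    have := le_max_left (ρ + 2) (0:ℝ)
    rw [hs]; linarith
  have hs4 : s < 4 * H - 1 := by rw [hs]; linarith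
  have hq2 : (2:ℝ) < 8 * H - 2 * s := by linarith
  set C1 : ℝ := ∑' k : {k : ℤ × ℤ // k ≠ 0}, znorm k.1 ^ (-(8 * H - 2 * s)) with hC1
  set C2 : ℝ := ∑' k : {k : ℤ × ℤ // k ≠ 0}, znorm k.1 ^ (-(8 * H)) with hC2
  have hC1s := summable_znorm_rpow hq2
  have hC2s := summable_znorm_rpow h8H
  -- the inner-sum bound
  have inner_bound : ∀ j : {j : ℤ × ℤ // j ≠ 0},
      (∑' h : {h : ℤ × ℤ // h ≠ 0 ∧ h ≠ j.1},
          1 / (znorm h.1 ^ (4 * H) * znorm (h.1 - j.1) ^ (4 * H)))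
        ≤ 2 ^ s * znorm j.1 ^ (-s) * (2 * (C1 + C2)) := by
    intro j
    have hzj : 0 < znorm j.1 := znorm_pos j.2
    set g : {h : ℤ × ℤ // h ≠ 0 ∧ h ≠ j.1} → ℝ := fun h =>
      2 ^ s * znorm j.1 ^ (-s) *
        (znorm h.1 ^ (-(8 * H - 2 * s)) + znorm (h.1 - j.1) ^ (-(8 * H)) +
          (znorm (h.1 - j.1) ^ (-(8 * H - 2 * s)) + znorm h.1 ^ (-(8 * H)))) with hg
    have hinj1 : Function.Injective
        (fun h : {h : ℤ × ℤ // h ≠ 0 ∧ h ≠ j.1} => (⟨h.1, h.2.1⟩ : {k : ℤ × ℤ // k ≠ 0})) := by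
      intro a b hab
      have h' := congrArg Subtype.val hab
      simp only at h'
      exact Subtype.ext h'
    have hinj2 : Function.Injective
        (fun h : {h : ℤ × ℤ // h ≠ 0 ∧ h ≠ j.1} =>
          (⟨h.1 - j.1, sub_ne_zero.mpr h.2.2⟩ : {k : ℤ × ℤ // k ≠ 0})) := by
      intro a b hab
      have h' := congrArg Subtype.val hab
      simp only at h'
      exact Subtype.ext (sub_left_inj.mp h')
    have hg1 : Summable (fun h : {h : ℤ × ℤ // h ≠ 0 ∧ h ≠ j.1} =>
        znorm h.1 ^ (-(8 * H - 2 * s))) := by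
      have := hC1s.comp_injective hinj1
      exact this.congr (fun h => rfl)
    have hg2 : Summable (fun h : {h : ℤ × ℤ // h ≠ 0 ∧ h ≠ j.1} =>
        znorm (h.1 - j.1) ^ (-(8 * H))) := by
      have := hC2s.comp_injective hinj2
      exact this.congr (fun h => rfl)
    have hg3 : Summable (fun h : {h : ℤ × ℤ // h ≠ 0 ∧ h ≠ j.1} =>
        znorm (h.1 - j.1) ^ (-(8 * H - 2 * s))) := by
      have := hC1s.comp_injective hinj2
      exact this.congr (fun h => rfl)
    have hg4 : Summable (fun h : {h : ℤ × ℤ // h ≠ 0 ∧ h ≠ j.1} =>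
        znorm h.1 ^ (-(8 * H))) := by
      have := hC2s.comp_injective hinj1
      exact this.congr (fun h => rfl)
    have hgsum : Summable g := (((hg1.add hg2).add (hg3.add hg4))).mul_left _
    have hfle : ∀ h : {h : ℤ × ℤ // h ≠ 0 ∧ h ≠ j.1},
        1 / (znorm h.1 ^ (4 * H) * znorm (h.1 - j.1) ^ (4 * H)) ≤ g h := by
      intro h
      have hx : 0 < znorm h.1 := znorm_pos h.2.1
      have hy : 0 < znorm (h.1 - j.1) := znorm_pos (sub_ne_zero.mpr h.2.2)
      have htri : znorm j.1 ≤ znorm h.1 + znorm (h.1 - j.1) := znorm_triangle h.1 j.1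
      rcases le_total (znorm (h.1 - j.1)) (znorm h.1) with hc | hc
      · have hzx : znorm j.1 / 2 ≤ znorm h.1 := by linarith
        refine le_trans (pointwise_aux (H := H) hx hy hzj hzx hs0) ?_
        rw [hg]
        apply mul_le_mul_of_nonneg_left _ (by positivity)
        have h1 : (0:ℝ) ≤ znorm (h.1 - j.1) ^ (-(8 * H - 2 * s)) := Real.rpow_nonneg hy.le _
        have h2 : (0:ℝ) ≤ znorm h.1 ^ (-(8 * H)) := Real.rpow_nonneg hx.le _
        linarith
      · have hzx : znorm j.1 / 2 ≤ znorm (h.1 - j.1) := by linarith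
        have := pointwise_aux (H := H) hy hx hzj hzx hs0
        rw [mul_comm (znorm (h.1 - j.1) ^ (4 * H)) (znorm h.1 ^ (4 * H))] at this
        refine le_trans this ?_
        rw [hg]
        apply mul_le_mul_of_nonneg_left _ (by positivity)
        have h1 : (0:ℝ) ≤ znorm h.1 ^ (-(8 * H - 2 * s)) := Real.rpow_nonneg hx.le _
        have h2 : (0:ℝ) ≤ znorm (h.1 - j.1) ^ (-(8 * H)) := Real.rpow_nonneg hy.le _
        linarith
    have hfnn : ∀ h : {h : ℤ × ℤ // h ≠ 0 ∧ h ≠ j.1},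
        0 ≤ 1 / (znorm h.1 ^ (4 * H) * znorm (h.1 - j.1) ^ (4 * H)) := by
      intro h
      have hx : 0 < znorm h.1 := znorm_pos h.2.1
      have hy : 0 < znorm (h.1 - j.1) := znorm_pos (sub_ne_zero.mpr h.2.2)
      positivity
    have hfs : Summable (fun h : {h : ℤ × ℤ // h ≠ 0 ∧ h ≠ j.1} =>
        1 / (znorm h.1 ^ (4 * H) * znorm (h.1 - j.1) ^ (4 * H))) :=
      hgsum.of_nonneg_of_le hfnn hfle
    calc (∑' h : {h : ℤ × ℤ // h ≠ 0 ∧ h ≠ j.1},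
            1 / (znorm h.1 ^ (4 * H) * znorm (h.1 - j.1) ^ (4 * H)))
        ≤ ∑' h, g h := Summable.tsum_le_tsum hfle hfs hgsum
      _ = 2 ^ s * znorm j.1 ^ (-s) *
          ((∑' h : {h : ℤ × ℤ // h ≠ 0 ∧ h ≠ j.1}, znorm h.1 ^ (-(8 * H - 2 * s)))
            + (∑' h : {h : ℤ × ℤ // h ≠ 0 ∧ h ≠ j.1}, znorm (h.1 - j.1) ^ (-(8 * H)))
            + ((∑' h : {h : ℤ × ℤ // h ≠ 0 ∧ h ≠ j.1}, znorm (h.1 - j.1) ^ (-(8 * H - 2 * s)))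
            + (∑' h : {h : ℤ × ℤ // h ≠ 0 ∧ h ≠ j.1}, znorm h.1 ^ (-(8 * H))))) := by
          rw [hg]
          rw [tsum_mul_left]
          congr 1
          rw [Summable.tsum_add (hg1.add hg2) (hg3.add hg4), Summable.tsum_add hg1 hg2, Summable.tsum_add hg3 hg4]
      _ ≤ 2 ^ s * znorm j.1 ^ (-s) * (C1 + C2 + (C1 + C2)) := by
          apply mul_le_mul_of_nonneg_left _ (by positivity)
          have e1 := hg1.tsum_le_tsum_of_inj _ hinj1
            (fun c _ => Real.rpow_nonneg (znorm_nonneg c.1) (-(8 * H - 2 * s)))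
            (fun h => le_refl (znorm h.1 ^ (-(8 * H - 2 * s)))) hC1s
          have e2 := hg2.tsum_le_tsum_of_inj _ hinj2
            (fun c _ => Real.rpow_nonneg (znorm_nonneg c.1) (-(8 * H)))
            (fun h => le_refl (znorm (h.1 - j.1) ^ (-(8 * H)))) hC2s
          have e3 := hg3.tsum_le_tsum_of_inj _ hinj2
            (fun c _ => Real.rpow_nonneg (znorm_nonneg c.1) (-(8 * H - 2 * s)))
            (fun h => le_refl (znorm (h.1 - j.1) ^ (-(8 * H - 2 * s)))) hC1s
          have e4 := hg4.tsum_le_tsum_of_inj _ hinj1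
            (fun c _ => Real.rpow_nonneg (znorm_nonneg c.1) (-(8 * H)))
            (fun h => le_refl (znorm h.1 ^ (-(8 * H)))) hC2s
          rw [hC1, hC2]
          exact add_le_add (add_le_add e1 e2) (add_le_add e3 e4)
      _ = 2 ^ s * znorm j.1 ^ (-s) * (2 * (C1 + C2)) := by ring
  -- outer summability
  set M : ℝ := 2 * (C1 + C2) with hM
  have hMnn : 0 ≤ M := by
    have h1 : 0 ≤ C1 := tsum_nonneg fun k => Real.rpow_nonneg (znorm_nonneg _) _
    have h2 : 0 ≤ C2 := tsum_nonneg fun k => Real.rpow_nonneg (znorm_nonneg _) _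
    rw [hM]; linarith
  have hout : (2:ℝ) < 2 * s - 2 * ρ - 2 := by linarith
  apply Summable.of_nonneg_of_le
    (f := fun j : {j : ℤ × ℤ // j ≠ 0} =>
      (2 ^ s * M) ^ 2 * znorm j.1 ^ (-(2 * s - 2 * ρ - 2)))
  · intro j
    have hzj : 0 < znorm j.1 := znorm_pos j.2
    have h1 : (0:ℝ) ≤ znorm j.1 ^ (2 * ρ + 2) := Real.rpow_nonneg hzj.le _
    exact mul_nonneg h1 (sq_nonneg _)
  · intro j
    have hzj : 0 < znorm j.1 := znorm_pos j.2
    have hSnn : (0:ℝ) ≤ ∑' h : {h : ℤ × ℤ // h ≠ 0 ∧ h ≠ j.1},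
        1 / (znorm h.1 ^ (4 * H) * znorm (h.1 - j.1) ^ (4 * H)) := by
      apply tsum_nonneg
      intro h
      have hx : 0 < znorm h.1 := znorm_pos h.2.1
      have hy : 0 < znorm (h.1 - j.1) := znorm_pos (sub_ne_zero.mpr h.2.2)
      positivity
    have hsq : (∑' h : {h : ℤ × ℤ // h ≠ 0 ∧ h ≠ j.1},
        1 / (znorm h.1 ^ (4 * H) * znorm (h.1 - j.1) ^ (4 * H))) ^ 2
        ≤ (2 ^ s * znorm j.1 ^ (-s) * M) ^ 2 :=
      pow_le_pow_left₀ hSnn (inner_bound j) 2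
    calc znorm j.1 ^ (2 * ρ + 2) *
          (∑' h : {h : ℤ × ℤ // h ≠ 0 ∧ h ≠ j.1},
            1 / (znorm h.1 ^ (4 * H) * znorm (h.1 - j.1) ^ (4 * H))) ^ 2
        ≤ znorm j.1 ^ (2 * ρ + 2) * (2 ^ s * znorm j.1 ^ (-s) * M) ^ 2 :=
          mul_le_mul_of_nonneg_left hsq (Real.rpow_nonneg hzj.le _)
      _ = (2 ^ s * M) ^ 2 * znorm j.1 ^ (-(2 * s - 2 * ρ - 2)) := by
          rw [mul_pow, mul_pow, rpow_sq hzj]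
          rw [show znorm j.1 ^ (2 * ρ + 2) * (((2:ℝ) ^ s) ^ 2 * znorm j.1 ^ (2 * -s) * M ^ 2)
              = ((2:ℝ) ^ s) ^ 2 * M ^ 2 * (znorm j.1 ^ (2 * ρ + 2) * znorm j.1 ^ (2 * -s)) by ring]
          rw [← Real.rpow_add hzj, show (2 * ρ + 2) + 2 * -s = -(2 * s - 2 * ρ - 2) by ring,
            mul_pow]
          rw [hM]
          ring
  · exact (summable_znorm_rpow hout).mul_left _
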